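/- Let v₁, …, v_{n-1} ∈ ℂⁿ be linearly independent over ℝ and pairwise isotropic, i.e. ω(vᵢ, vⱼ) = 0 for all i, j, and let X ∈ ℂⁿ be the unique vector with Re⟨X, w⟩ = Re(Ω(v₁, …, v_{n-1}, w)) for all w ∈ ℂⁿ. Then the real span Q of {v₁, …, v_{n-1}, X} is an n-dimensional real subspace of ℂⁿ, ω(p, q) = 0 for all p, q ∈ Q, and Im(Ω(w₁, …, wₙ)) = 0 whenever w₁, …, wₙ ∈ Q. Moreover, Q is the unique n-dimensional real subspace of ℂⁿ containing v₁, …, v_{n-1} with these two vanishing properties. -/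

import Mathlib

noncomputable section
abbrev EE (n : ℕ) := EuclideanSpace ℂ (Fin n)

noncomputable def detE (n : ℕ) : (EE n) [⋀^Fin n]→ₗ[ℂ] ℂ :=
  (Matrix.detRowAlternating).compLinearMap (WithLp.linearEquiv 2 ℂ (Fin n → ℂ)).toLinearMap

lemma detE_apply {n : ℕ} (u : Fin n → EE n) :
    Matrix.det (Matrix.of fun i j => u j i) = detE n u := by
  rw [show (Matrix.of fun i j => u j i) = Matrix.transpose (Matrix.of fun i j => u i j) from rfl,
    Matrix.det_transpose]
  rfl

noncomputable def imDetE (n : ℕ) : (EE n) [⋀^Fin n]→ₗ[ℝ] ℝ :=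
  { Complex.imLm.compMultilinearMap ((detE n).toMultilinearMap.restrictScalars ℝ) with
    map_eq_zero_of_eq' := fun u i j h hij => by
      have := (detE n).map_eq_zero_of_eq u h hij
      simp only [LinearMap.compMultilinearMap_apply, MultilinearMap.coe_restrictScalars]
      simp [this] }

lemma imDetE_apply {n : ℕ} (u : Fin n → EE n) : imDetE n u = (detE n u).im := rfl

lemma detE_smul_last {m : ℕ} (v : Fin m → EE (m+1)) (w : EE (m+1)) (c : ℂ) :
    detE (m+1) (Fin.snoc v (c • w)) = c * detE (m+1) (Fin.snoc v w) := by
  have h1 : Fin.snoc v (c • w) =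
      Function.update (β := fun _ => EE (m+1)) (Fin.snoc v w) (Fin.last m) (c • w) :=
    by rw [Fin.update_snoc_last]
  have h2 : Fin.snoc v w =
      Function.update (β := fun _ => EE (m+1)) (Fin.snoc v w) (Fin.last m) w :=
    by rw [Fin.update_snoc_last]
  rw [h1, (detE (m+1)).map_update_smul (Fin.snoc v w) (Fin.last m) c w, ← h2, smul_eq_mul]

lemma inner_eq_detE {m : ℕ} (v : Fin m → EE (m+1)) (X : EE (m+1))
    (hX : ∀ w, (inner ℂ X w : ℂ).re = (detE (m+1) (Fin.snoc v w)).re) (w : EE (m+1)) :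
    (inner ℂ X w : ℂ) = detE (m+1) (Fin.snoc v w) := by
  have h1 := hX w
  have h2 := hX (Complex.I • w)
  rw [inner_smul_right, detE_smul_last] at h2
  apply Complex.ext h1
  have := h2
  simp only [Complex.mul_re, Complex.I_re, Complex.I_im] at this
  linarith

lemma real_smul_eq {n : ℕ} (r : ℝ) (x : EE n) : (r : ℂ) • x = r • x := by
  rw [Complex.coe_smul]

lemma complexLI {n k : ℕ} {e : Fin k → EE n} (hli : LinearIndependent ℝ e)
    (hiso : ∀ i j, (inner ℂ (e i) (e j) : ℂ).im = 0) : LinearIndependent ℂ e := by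
  have hreal : ∀ b : Fin k → ℝ, ∑ i, (b i : ℂ) • e i = 0 → ∀ i, b i = 0 := by
    intro b hb
    refine Fintype.linearIndependent_iff.mp hli b ?_
    rw [← hb]
    exact Finset.sum_congr rfl fun i _ => (real_smul_eq (b i) (e i)).symm
  rw [Fintype.linearIndependent_iff]
  intro c hc
  set a : Fin k → ℝ := fun i => (c i).re with ha
  set b : Fin k → ℝ := fun i => (c i).im with hb
  set A : EE n := ∑ i, (a i : ℂ) • e i with hA
  set B : EE n := ∑ i, (b i : ℂ) • e i with hB
  have hsplit : A + Complex.I • B = 0 := by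
    rw [hA, hB, Finset.smul_sum, ← Finset.sum_add_distrib, ← hc]
    refine Finset.sum_congr rfl fun i _ => ?_
    rw [smul_smul, ← add_smul]
    congr 1
    rw [mul_comm]
    exact Complex.re_add_im (c i)
  have hAB : A = -(Complex.I • B) := by linear_combination (norm := module) hsplit
  have hiB : ((inner ℂ B A : ℂ)).im = - ‖B‖^2 := by
    rw [hAB, inner_neg_right, inner_smul_right]
    rw [Complex.neg_im, Complex.mul_im]
    simp only [Complex.I_re, Complex.I_im, inner_self_eq_norm_sq_to_K]
    rw [pow_two, pow_two, Complex.mul_re]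
    simp
  have hiB2 : ((inner ℂ B A : ℂ)).im = 0 := by
    rw [hB, hA, sum_inner]
    rw [Complex.im_sum]
    refine Finset.sum_eq_zero fun j _ => ?_
    rw [inner_smul_left, inner_sum, Finset.mul_sum, Complex.im_sum]
    refine Finset.sum_eq_zero fun i _ => ?_
    rw [inner_smul_right, Complex.conj_ofReal]
    have h0 := hiso j i
    simp only [Complex.mul_im, Complex.mul_re, Complex.ofReal_im, Complex.ofReal_re, h0]
    ring
  have hBnorm : B = 0 := by
    have : ‖B‖^2 = 0 := by rw [hiB2] at hiB; linarith
    simpa using pow_eq_zero_iff (n := 2) (by norm_num) |>.mp this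
  have hbz : ∀ i, b i = 0 := hreal b (by rw [← hB, hBnorm])
  have hAz : A = 0 := by rw [hAB, hBnorm, smul_zero, neg_zero]
  have haz : ∀ i, a i = 0 := hreal a (by rw [← hA, hAz])
  intro i
  have hci : c i = (a i : ℂ) + (b i : ℂ) * Complex.I := (Complex.re_add_im (c i)).symm
  rw [hci, haz i, hbz i]
  simp

section Main
variable {m : ℕ} {v : Fin m → EE (m+1)} {X : EE (m+1)}

lemma real_inner_re {n : ℕ} (x y : EE n) : (inner ℝ x y : ℝ) = (inner ℂ x y : ℂ).re := by
  simp [PiLp.inner_apply, Complex.inner]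

lemma detE_snoc_vi (v : Fin m → EE (m+1)) (i : Fin m) :
    detE (m+1) (Fin.snoc v (v i)) = 0 := by
  refine (detE (m+1)).map_eq_zero_of_eq _ (i := i.castSucc) (j := Fin.last m) ?_ ?_
  · rw [Fin.snoc_castSucc, Fin.snoc_last]
  · exact Fin.ne_of_lt (Fin.castSucc_lt_last i)

lemma detE_std : detE (m+1) (fun i => EuclideanSpace.single i (1:ℂ)) = 1 := by
  rw [← detE_apply]
  have : (Matrix.of fun i j => EuclideanSpace.single j (1:ℂ) i) = (1 : Matrix (Fin (m+1)) (Fin (m+1)) ℂ) := by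
    ext i j
    simp [EuclideanSpace.single_apply, Matrix.one_apply, eq_comm]
  rw [this, Matrix.det_one]

lemma detE_ne_zero : detE (m+1) ≠ 0 := by
  intro h
  have := detE_std (m := m)
  rw [h] at this
  simp at this

lemma exists_w (hli : LinearIndependent ℝ v)
    (hiso : ∀ i j, (inner ℂ (v i) (v j) : ℂ).im = 0) :
    ∃ w, detE (m+1) (Fin.snoc v w) ≠ 0 := by
  have vC : LinearIndependent ℂ v := complexLI hli hiso
  have hne : Submodule.span ℂ (Set.range v) ≠ ⊤ := by
    intro h
    have h1 : Module.finrank ℂ (Submodule.span ℂ (Set.range v)) ≤ m := by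
      simpa [Set.finrank] using finrank_range_le_card v
    rw [h, finrank_top] at h1
    rw [finrank_euclideanSpace_fin] at h1
    omega
  obtain ⟨w, hw⟩ : ∃ w, w ∉ Submodule.span ℂ (Set.range v) := by
    by_contra h
    push_neg at h
    exact hne (Submodule.eq_top_iff'.mpr h)
  have hsnocC : LinearIndependent ℂ (Fin.snoc v w : Fin (m+1) → EE (m+1)) :=
    linearIndependent_fin_snoc.mpr ⟨vC, hw⟩
  have hcard : Fintype.card (Fin (m+1)) = Module.finrank ℂ (EE (m+1)) := by
    simp [finrank_euclideanSpace_fin]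
  let b := basisOfLinearIndependentOfCardEqFinrank hsnocC hcard
  refine ⟨w, ?_⟩
  have hb : ⇑b = Fin.snoc v w := coe_basisOfLinearIndependentOfCardEqFinrank hsnocC hcard
  have := ((detE (m+1)).map_basis_ne_zero_iff b).mpr detE_ne_zero
  rwa [hb] at this

lemma X_ne_zero (hli : LinearIndependent ℝ v)
    (hiso : ∀ i j, (inner ℂ (v i) (v j) : ℂ).im = 0)
    (hX' : ∀ w, (inner ℂ X w : ℂ) = detE (m+1) (Fin.snoc v w)) : X ≠ 0 := by
  obtain ⟨w, hw⟩ := exists_w hli hiso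
  intro h
  rw [← hX', h, inner_zero_left] at hw
  exact hw rfl

lemma X_not_mem (hli : LinearIndependent ℝ v)
    (hiso : ∀ i j, (inner ℂ (v i) (v j) : ℂ).im = 0)
    (hX' : ∀ w, (inner ℂ X w : ℂ) = detE (m+1) (Fin.snoc v w)) :
    X ∉ Submodule.span ℝ (Set.range v) := by
  intro hmem
  have hXv : ∀ i, (inner ℝ (v i) X : ℝ) = 0 := by
    intro i
    rw [real_inner_re]
    have h1 : (inner ℂ X (v i) : ℂ) = 0 := by rw [hX' (v i), detE_snoc_vi]
    have : (inner ℂ (v i) X : ℂ) = 0 := by rw [← inner_conj_symm, h1, map_zero]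
    rw [this, Complex.zero_re]
  have hall : ∀ q ∈ Submodule.span ℝ (Set.range v), (inner ℝ q X : ℝ) = 0 := by
    intro q hq
    induction hq using Submodule.span_induction with
    | mem x hx => obtain ⟨i, rfl⟩ := hx; exact hXv i
    | zero => rw [inner_zero_left]
    | add x y hx hy ihx ihy => rw [inner_add_left, ihx, ihy, add_zero]
    | smul r x hx ihx => rw [real_inner_smul_left, ihx, mul_zero]
  have hXX : (inner ℝ X X : ℝ) = 0 := hall X hmem
  have : X = 0 := by
    have := real_inner_self_eq_norm_sq X
    rw [hXX] at this
    have hn : ‖X‖ = 0 := by nlinarith [norm_nonneg X]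
    simpa using hn
  exact X_ne_zero hli hiso hX' this

lemma snoc_li (hli : LinearIndependent ℝ v)
    (hiso : ∀ i j, (inner ℂ (v i) (v j) : ℂ).im = 0)
    (hX' : ∀ w, (inner ℂ X w : ℂ) = detE (m+1) (Fin.snoc v w)) :
    LinearIndependent ℝ (Fin.snoc v X : Fin (m+1) → EE (m+1)) :=
  linearIndependent_fin_snoc.mpr ⟨hli, X_not_mem hli hiso hX'⟩

lemma part1 (hli : LinearIndependent ℝ v)
    (hiso : ∀ i j, (inner ℂ (v i) (v j) : ℂ).im = 0)
    (hX' : ∀ w, (inner ℂ X w : ℂ) = detE (m+1) (Fin.snoc v w)) :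
    Module.finrank ℝ (Submodule.span ℝ (Set.range (Fin.snoc v X))) = m + 1 := by
  rw [finrank_span_eq_card (snoc_li hli hiso hX')]
  simp

lemma gen_iso (hiso : ∀ i j, (inner ℂ (v i) (v j) : ℂ).im = 0)
    (hX' : ∀ w, (inner ℂ X w : ℂ) = detE (m+1) (Fin.snoc v w)) :
    ∀ i j, (inner ℂ ((Fin.snoc v X : Fin (m+1) → EE (m+1)) i)
      ((Fin.snoc v X : Fin (m+1) → EE (m+1)) j) : ℂ).im = 0 := by
  have hXv : ∀ i, (inner ℂ X (v i) : ℂ) = 0 := fun i => by rw [hX' (v i), detE_snoc_vi]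
  intro i j
  refine Fin.lastCases ?_ ?_ i <;> [skip; intro i'] <;>
    refine Fin.lastCases ?_ ?_ j <;> try intro j'
  · simp only [Fin.snoc_last]
    exact inner_self_im (𝕜 := ℂ) X
  · simp only [Fin.snoc_last, Fin.snoc_castSucc]
    rw [hXv j']
    simp
  · simp only [Fin.snoc_last, Fin.snoc_castSucc]
    rw [← inner_conj_symm, hXv i']
    simp
  · simp only [Fin.snoc_castSucc]
    exact hiso i' j'

lemma part2 (hiso : ∀ i j, (inner ℂ (v i) (v j) : ℂ).im = 0)
    (hX' : ∀ w, (inner ℂ X w : ℂ) = detE (m+1) (Fin.snoc v w)) :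
    ∀ p ∈ Submodule.span ℝ (Set.range (Fin.snoc v X)),
      ∀ q ∈ Submodule.span ℝ (Set.range (Fin.snoc v X)),
        (inner ℂ p q : ℂ).im = 0 := by
  intro p hp q hq
  induction hp, hq using Submodule.span_induction₂ with
  | mem_mem x y hx hy =>
    obtain ⟨i, rfl⟩ := hx; obtain ⟨j, rfl⟩ := hy
    exact gen_iso hiso hX' i j
  | zero_left y hy => simp
  | zero_right x hx => simp
  | add_left x y z hx hy hz h1 h2 => rw [inner_add_left, Complex.add_im, h1, h2, add_zero]
  | add_right x y z hx hy hz h1 h2 => rw [inner_add_right, Complex.add_im, h1, h2, add_zero]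
  | smul_left r x y hx hy h1 =>
    rw [show (r • x : EE (m+1)) = (r : ℂ) • x from (real_smul_eq r x).symm, inner_smul_left,
      Complex.conj_ofReal]
    simp only [Complex.mul_im, Complex.ofReal_im, Complex.ofReal_re, h1]
    ring
  | smul_right r x y hx hy h1 =>
    rw [show (r • y : EE (m+1)) = (r : ℂ) • y from (real_smul_eq r y).symm, inner_smul_right]
    simp only [Complex.mul_im, Complex.ofReal_im, Complex.ofReal_re, h1]
    ring

lemma part3 (hli : LinearIndependent ℝ v)
    (hiso : ∀ i j, (inner ℂ (v i) (v j) : ℂ).im = 0)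
    (hX' : ∀ w, (inner ℂ X w : ℂ) = detE (m+1) (Fin.snoc v w)) :
    ∀ u : Fin (m+1) → EE (m+1),
      (∀ i, u i ∈ Submodule.span ℝ (Set.range (Fin.snoc v X))) →
      (detE (m+1) u).im = 0 := by
  intro u hu
  set W := Submodule.span ℝ (Set.range (Fin.snoc v X)) with hW
  let b : Module.Basis (Fin (m+1)) ℝ W := Module.Basis.span (snoc_li hli hiso hX')
  let g' := (imDetE (m+1)).compLinearMap W.subtype
  have hgb : g' ⇑b = 0 := by
    have hcoe : (fun i => (W.subtype (b i))) = (Fin.snoc v X : Fin (m+1) → EE (m+1)) := by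
      funext i
      exact congrArg Subtype.val (Module.Basis.span_apply (snoc_li hli hiso hX') i)
    show imDetE (m+1) (fun i => W.subtype (b i)) = 0
    rw [hcoe, imDetE_apply, ← hX' X]
    exact inner_self_im (𝕜 := ℂ) X
  have hg := g'.eq_smul_basis_det b
  rw [hgb, zero_smul] at hg
  have h2 : (detE (m+1) u).im = g' (fun i => (⟨u i, hu i⟩ : W)) := rfl
  rw [h2, hg]
  rfl

lemma part4 (hli : LinearIndependent ℝ v)
    (hiso : ∀ i j, (inner ℂ (v i) (v j) : ℂ).im = 0)
    (hX' : ∀ w, (inner ℂ X w : ℂ) = detE (m+1) (Fin.snoc v w))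
    (Q : Submodule ℝ (EE (m+1)))
    (hrank : Module.finrank ℝ Q = m + 1)
    (hQv : ∀ i, v i ∈ Q)
    (hQω : ∀ p ∈ Q, ∀ q ∈ Q, (inner ℂ p q : ℂ).im = 0)
    (hQdet : ∀ u : Fin (m+1) → EE (m+1), (∀ i, u i ∈ Q) → (detE (m+1) u).im = 0) :
    Q = Submodule.span ℝ (Set.range (Fin.snoc v X)) := by
  classical
  let J : EE (m+1) ≃ₗ[ℝ] EE (m+1) :=
    (LinearEquiv.smulOfNeZero ℂ (EE (m+1)) Complex.I Complex.I_ne_zero).restrictScalars ℝ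
  have hJ : ∀ x, J x = Complex.I • x := fun x => rfl
  have hle : Q.map J.toLinearMap ≤ Qᗮ := by
    rintro x ⟨q, hq, rfl⟩
    rw [Submodule.mem_orthogonal]
    intro u hu
    show (inner ℝ u (J q) : ℝ) = 0
    rw [hJ, real_inner_re, inner_smul_right, Complex.mul_re]
    simp only [Complex.I_re, Complex.I_im, zero_mul, one_mul, zero_sub, neg_eq_zero]
    exact hQω u hu q hq
  have hEfr : Module.finrank ℝ (EE (m+1)) = 2 * (m + 1) := by
    rw [← Module.finrank_mul_finrank ℝ ℂ (EE (m+1)), Complex.finrank_real_complex,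
      finrank_euclideanSpace_fin]
  have hofr : Module.finrank ℝ Qᗮ = m + 1 := by
    have := Submodule.finrank_add_finrank_orthogonal Q
    rw [hrank, hEfr] at this
    omega
  have hmfr : Module.finrank ℝ (Q.map J.toLinearMap) = m + 1 := by
    rw [LinearEquiv.finrank_map_eq]
    exact hrank
  have heq : Q.map J.toLinearMap = Qᗮ :=
    Submodule.eq_of_le_of_finrank_le hle (by rw [hofr, hmfr])
  have hXQ : X ∈ Q := by
    rw [← Submodule.orthogonal_orthogonal Q, Submodule.mem_orthogonal]
    intro u hu
    rw [← heq] at hu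
    obtain ⟨q, hq, rfl⟩ := hu
    show (inner ℝ (J q) X : ℝ) = 0
    have hz : (inner ℂ q X : ℂ).im = 0 := by
      have hmemb : ∀ i, (Fin.snoc v q : Fin (m+1) → EE (m+1)) i ∈ Q := by
        intro i
        refine Fin.lastCases ?_ ?_ i
        · rw [Fin.snoc_last]; exact hq
        · intro i'; rw [Fin.snoc_castSucc]; exact hQv i'
      have h1 : (inner ℂ X q : ℂ).im = 0 := by
        rw [hX' q]
        exact hQdet _ hmemb
      rw [← inner_conj_symm, Complex.conj_im, h1, neg_zero]
    rw [hJ, real_inner_re, inner_smul_left, Complex.conj_I, Complex.mul_re]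
    simp only [Complex.neg_re, Complex.neg_im, Complex.I_re, Complex.I_im]
    rw [hz]
    ring
  have hspanle : Submodule.span ℝ (Set.range (Fin.snoc v X)) ≤ Q := by
    rw [Submodule.span_le]
    rintro x ⟨i, rfl⟩
    refine Fin.lastCases ?_ ?_ i
    · rw [Fin.snoc_last]; exact hXQ
    · intro i'; rw [Fin.snoc_castSucc]; exact hQv i'
  exact (Submodule.eq_of_le_of_finrank_le hspanle
    (by rw [hrank, part1 hli hiso hX'])).symm

end Main

end

/-- (Extension of an isotropic `(n-1)`-plane to a unique
special Lagrangian `n`-plane, `n = m + 1 ≥ 2`.) Let `v₁, …, v_{n-1} ∈ ℂⁿ` be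
`ℝ`-linearly independent and pairwise isotropic for `ω(z, w) = Im ⟨z, w⟩`, and
let `X` be the calibrated cross product, i.e. the unique vector with
`Re ⟨X, w⟩ = Re (Ω (v₁, …, v_{n-1}, w))` for all `w`.  Then the real span `Q`
of `v₁, …, v_{n-1}, X` is an `n`-dimensional real subspace on which `ω`
vanishes and `Im Ω` vanishes on every `n`-tuple from `Q`; moreover `Q` is the
unique such `n`-dimensional real subspace containing `v₁, …, v_{n-1}`. -/
theorem statement17 (m : ℕ) (hm : 1 ≤ m)
    (v : Fin m → EuclideanSpace ℂ (Fin (m + 1)))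
    (hli : LinearIndependent ℝ v)
    (hiso : ∀ i j, (inner ℂ (v i) (v j) : ℂ).im = 0)
    (X : EuclideanSpace ℂ (Fin (m + 1)))
    (hX : ∀ w : EuclideanSpace ℂ (Fin (m + 1)),
      (inner ℂ X w : ℂ).re =
        (Matrix.det (Matrix.of fun i j =>
          (Fin.snoc v w : Fin (m + 1) → EuclideanSpace ℂ (Fin (m + 1))) j i)).re) :
    Module.finrank ℝ (Submodule.span ℝ (Set.range (Fin.snoc v X))) = m + 1 ∧
    (∀ p ∈ Submodule.span ℝ (Set.range (Fin.snoc v X)),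
      ∀ q ∈ Submodule.span ℝ (Set.range (Fin.snoc v X)),
        (inner ℂ p q : ℂ).im = 0) ∧
    (∀ u : Fin (m + 1) → EuclideanSpace ℂ (Fin (m + 1)),
      (∀ i, u i ∈ Submodule.span ℝ (Set.range (Fin.snoc v X))) →
      (Matrix.det (Matrix.of fun i j => u j i)).im = 0) ∧
    (∀ Q : Submodule ℝ (EuclideanSpace ℂ (Fin (m + 1))),
      Module.finrank ℝ Q = m + 1 →
      (∀ i, v i ∈ Q) →
      (∀ p ∈ Q, ∀ q ∈ Q, (inner ℂ p q : ℂ).im = 0) →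
      (∀ u : Fin (m + 1) → EuclideanSpace ℂ (Fin (m + 1)),
        (∀ i, u i ∈ Q) → (Matrix.det (Matrix.of fun i j => u j i)).im = 0) →
      Q = Submodule.span ℝ (Set.range (Fin.snoc v X))) := by
  have hX0 : ∀ w, (inner ℂ X w : ℂ).re = (detE (m+1) (Fin.snoc v w)).re := by
    intro w
    rw [← detE_apply]
    exact hX w
  have hX' : ∀ w, (inner ℂ X w : ℂ) = detE (m+1) (Fin.snoc v w) := inner_eq_detE v X hX0
  refine ⟨part1 hli hiso hX', part2 hiso hX', ?_, ?_⟩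
  · intro u hu
    rw [detE_apply]
    exact part3 hli hiso hX' u hu
  · intro Q hrank hQv hQω hQdet
    refine part4 hli hiso hX' Q hrank hQv hQω ?_
    intro u hu
    rw [← detE_apply]
    exact hQdet u hu
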